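/- Let (X, L) be a normally generated polarized variety. For any subspace W ⊆ H⁰(X, L), the natural map K_{p,1}(X, L; W) → K_{p,1}(X, L) is injective for all p ≥ 0. -/

import Mathlib

/-!
STATEMENT 6 (Proposition `inc-subspace`): for a normally generated polarized variety `(X, L)`
and a subspace `W ⊆ H⁰(X, L)`, the natural map `K_{p,1}(X, L; W) → K_{p,1}(X, L)` is
injective (written here with `p` replaced by `p+1` to avoid natural subtraction).

Normal generation identifies the section ring `Γ_X(L)` with `S/I`, where `S = Sym H⁰(L)` is
a polynomial ring and `I` the homogeneous ideal of `X ⊆ P(H⁰(L)∨)`; `X` integral makes `I`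
prime, and very ampleness/linear normality give `I₀ = I₁ = 0`.  So we take
`S = ℂ[xᵢ : i ∈ σ]`, `V = H⁰(L) = Sym¹`, a homogeneous prime ideal `I` with no components in
degrees `≤ 1`, and `W ≤ V`.  Then `K_{p+1,1}` (for `W` resp. `V`) is the cohomology of
`Λ^{p+2} → Λ^{p+1} ⊗ V → Λ^p ⊗ (Sym²/I₂)` and injectivity of the induced map on cohomology
is stated elementwise: a `W`-cocycle which becomes a boundary over `V` is a boundary over
`W`.
-/

open ExteriorAlgebra TensorProduct

set_option synthInstance.maxHeartbeats 1000000
set_option maxHeartbeats 1600000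

noncomputable section

/-- `v₁ ∧ ⋯ ∧ vₙ` as an element of the `n`-th exterior power. -/
def expow {R M : Type*} [CommRing R] [AddCommGroup M] [Module R M] (n : ℕ) (v : Fin n → M) :
    ⋀[R]^n M :=
  ⟨ιMulti R n v, ιMulti_range R n ⟨v, rfl⟩⟩

/-- The product of two linear forms, as an element of `Sym²`. -/
def mulDeg2 {σ : Type*} (v w : MvPolynomial.homogeneousSubmodule σ ℂ 1) :
    MvPolynomial.homogeneousSubmodule σ ℂ 2 :=
  ⟨(v : MvPolynomial σ ℂ) * (w : MvPolynomial σ ℂ), by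
    rw [MvPolynomial.mem_homogeneousSubmodule]
    simpa using
      ((MvPolynomial.mem_homogeneousSubmodule _ _).1 v.2).mul
        ((MvPolynomial.mem_homogeneousSubmodule _ _).1 w.2)⟩

/-- The degree-two part of the section ring `Γ_X(L) = S/I`, namely `Sym²(H⁰(L))/I₂`. -/
def Gamma2 {σ : Type*} (I : Ideal (MvPolynomial σ ℂ)) :=
  (MvPolynomial.homogeneousSubmodule σ ℂ 2) ⧸
    (Submodule.comap (MvPolynomial.homogeneousSubmodule σ ℂ 2).subtype (I.restrictScalars ℂ))

instance {σ : Type*} (I : Ideal (MvPolynomial σ ℂ)) : AddCommGroup (Gamma2 I) := by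
  unfold Gamma2; infer_instance

instance {σ : Type*} (I : Ideal (MvPolynomial σ ℂ)) : Module ℂ (Gamma2 I) := by
  unfold Gamma2; infer_instance

/-- The class of a degree-two form in `Γ₂ = Sym²/I₂`. -/
def toGamma2 {σ : Type*} (I : Ideal (MvPolynomial σ ℂ))
    (f : MvPolynomial.homogeneousSubmodule σ ℂ 2) : Gamma2 I :=
  Submodule.Quotient.mk f

namespace KoszulAux

variable {M N : Type*} [AddCommGroup M] [Module ℂ M] [AddCommGroup N] [Module ℂ N]

lemma expow_span (n : ℕ) :
    Submodule.span ℂ (Set.range (expow (R := ℂ) (M := M) n)) = ⊤ := by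
  apply Submodule.map_injective_of_injective
    (show Function.Injective (⋀[ℂ]^n M).subtype from Subtype.coe_injective)
  rw [Submodule.map_span, Submodule.map_top, Submodule.range_subtype]
  rw [← Set.range_comp]
  have : (⋀[ℂ]^n M).subtype ∘ expow (R := ℂ) (M := M) n = ιMulti ℂ n := rfl
  rw [this, ιMulti_span_fixedDegree]

lemma expow_ext {n : ℕ} {P : Type*} [AddCommMonoid P] [Module ℂ P]
    {f g : ↥(⋀[ℂ]^n M) →ₗ[ℂ] P}
    (h : ∀ v : Fin n → M, f (expow n v) = g (expow n v)) : f = g :=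
  LinearMap.ext_on (expow_span n) (by rintro _ ⟨v, rfl⟩; exact h v)

lemma expow_tmul_ext {n : ℕ} {P Q : Type*} [AddCommMonoid P] [Module ℂ P]
    [AddCommMonoid Q] [Module ℂ Q]
    {f g : (↥(⋀[ℂ]^n M)) ⊗[ℂ] P →ₗ[ℂ] Q}
    (h : ∀ (v : Fin n → M) (x : P), f (expow n v ⊗ₜ x) = g (expow n v ⊗ₜ x)) : f = g := by
  apply TensorProduct.ext
  apply expow_ext
  intro v
  apply LinearMap.ext
  intro x
  simpa using h v x

/-- Functoriality of exterior powers. -/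
def pmap (f : M →ₗ[ℂ] N) (n : ℕ) : ↥(⋀[ℂ]^n M) →ₗ[ℂ] ↥(⋀[ℂ]^n N) :=
  (ExteriorAlgebra.map f).toLinearMap.restrict (p := ⋀[ℂ]^n M) (q := ⋀[ℂ]^n N) (by
    intro x hx
    rw [← ιMulti_span_fixedDegree] at hx
    rw [show (⋀[ℂ]^n N : Submodule ℂ _) = _ from (ιMulti_span_fixedDegree ℂ n).symm]
    induction hx using Submodule.span_induction with
    | mem x hx =>
      obtain ⟨v, rfl⟩ := hx
      simp only [AlgHom.toLinearMap_apply, map_apply_ιMulti]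
      exact Submodule.subset_span ⟨f ∘ v, rfl⟩
    | zero => simp only [map_zero]; exact Submodule.zero_mem _
    | add a b _ _ ha hb => simp only [map_add]; exact Submodule.add_mem _ ha hb
    | smul c a _ ha => simp only [map_smul]; exact Submodule.smul_mem _ c ha)

lemma pmap_expow (f : M →ₗ[ℂ] N) (n : ℕ) (v : Fin n → M) :
    pmap f n (expow n v) = expow n (f ∘ v) :=
  Subtype.ext (by
    simp only [pmap, LinearMap.restrict_apply, expow, AlgHom.toLinearMap_apply,
      map_apply_ιMulti])

lemma pmap_pmap {P : Type*} [AddCommGroup P] [Module ℂ P]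
    (f : N →ₗ[ℂ] P) (g : M →ₗ[ℂ] N) (n : ℕ) (x : ↥(⋀[ℂ]^n M)) :
    pmap f n (pmap g n x) = pmap (f ∘ₗ g) n x :=
  Subtype.ext (by
    simp only [pmap, LinearMap.restrict_apply, AlgHom.toLinearMap_apply]
    rw [← ExteriorAlgebra.map_comp_map]
    rfl)

/-- Left wedge multiplication `Λⁿ M ⊗ M → Λⁿ⁺¹ M`, `ω ⊗ x ↦ x ∧ ω`. -/
def wedgeL (n : ℕ) : (↥(⋀[ℂ]^n M)) ⊗[ℂ] M →ₗ[ℂ] ↥(⋀[ℂ]^(n+1) M) :=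
  TensorProduct.lift (LinearMap.mk₂ ℂ
    (fun ω x => (⟨ExteriorAlgebra.ι ℂ x * (ω : ExteriorAlgebra ℂ M), by
      have h := Submodule.mul_mem_mul
        (LinearMap.mem_range_self (ExteriorAlgebra.ι ℂ (M := M)) x) ω.2
      rwa [← pow_succ'] at h⟩ : ↥(⋀[ℂ]^(n+1) M)))
    (fun a b x => Subtype.ext (by simp [mul_add]))
    (fun c a x => Subtype.ext (by simp [mul_smul_comm]))
    (fun a x y => Subtype.ext (by simp [add_mul]))
    (fun c a x => Subtype.ext (by simp [smul_mul_assoc])))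

lemma wedgeL_tmul (n : ℕ) (v : Fin n → M) (x : M) :
    wedgeL n (expow n v ⊗ₜ x) = expow (n+1) (Fin.cons x v) :=
  Subtype.ext (by
    show ExteriorAlgebra.ι ℂ x * ιMulti ℂ n v = ιMulti ℂ (n+1) (Fin.cons x v)
    rw [ιMulti_succ_apply]
    congr 1)

lemma expow_cons_self {n : ℕ} (v : Fin (n+1) → M) (i : Fin (n+1)) :
    expow (R := ℂ) (n+1) (Fin.cons (v i) (v ∘ i.succAbove)) =
      ((-1 : ℂ) ^ (i : ℕ)) • expow (n+1) v := by
  apply Subtype.ext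
  show ιMulti ℂ (n+1) _ = ((-1 : ℂ) ^ (i : ℕ)) • ιMulti ℂ (n+1) v
  have hfun : Fin.cons (v i) (v ∘ i.succAbove) =
      v ∘ (i.cycleRange.symm : Equiv.Perm (Fin (n+1))) := by
    funext k
    induction k using Fin.cases with
    | zero => simp
    | succ k => simp [Fin.cons_succ, Fin.cycleRange_symm_succ]
  rw [hfun, AlternatingMap.map_perm, Equiv.Perm.sign_symm, Fin.sign_cycleRange]
  rcases Nat.even_or_odd (i : ℕ) with he | ho
  · rw [he.neg_one_pow, he.neg_one_pow, one_smul, one_smul]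
  · rw [ho.neg_one_pow, ho.neg_one_pow, Units.smul_def]
    push_cast
    rw [neg_one_zsmul, neg_one_smul]

/-- The abstract linear-algebra core of the statement: if a `W`-chain `x` in
`Λ^{p+1}W ⊗ V` becomes a Koszul boundary over `V`, it is already a boundary over `W`. -/
theorem main {W V : Type*} [AddCommGroup W] [Module ℂ W] [AddCommGroup V] [Module ℂ V]
    (p : ℕ) (j : W →ₗ[ℂ] V) (hj : Function.Injective j)
    (dW1 : ↥(⋀[ℂ]^(p+2) W) →ₗ[ℂ] (↥(⋀[ℂ]^(p+1) W)) ⊗[ℂ] V)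
    (hdW1 : ∀ w : Fin (p+2) → W,
      dW1 (expow (p+2) w) = ∑ i : Fin (p+2), ((-1 : ℂ) ^ (i : ℕ)) •
        ((expow (p+1) (w ∘ i.succAbove)) ⊗ₜ[ℂ] j (w i)))
    (dV1 : ↥(⋀[ℂ]^(p+2) V) →ₗ[ℂ] (↥(⋀[ℂ]^(p+1) V)) ⊗[ℂ] V)
    (hdV1 : ∀ v : Fin (p+2) → V,
      dV1 (expow (p+2) v) = ∑ i : Fin (p+2), ((-1 : ℂ) ^ (i : ℕ)) •
        ((expow (p+1) (v ∘ i.succAbove)) ⊗ₜ[ℂ] v i))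
    (em : ↥(⋀[ℂ]^(p+1) W) →ₗ[ℂ] ↥(⋀[ℂ]^(p+1) V))
    (hem : ∀ w : Fin (p+1) → W, em (expow (p+1) w) = expow (p+1) (j ∘ w))
    (x : (↥(⋀[ℂ]^(p+1) W)) ⊗[ℂ] V)
    (hx : (TensorProduct.map em LinearMap.id) x ∈ LinearMap.range dV1) :
    x ∈ LinearMap.range dW1 := by
  obtain ⟨r, hr⟩ := j.exists_leftInverse_of_injective (LinearMap.ker_eq_bot.mpr hj)
  have hrj : ∀ w : W, r (j w) = w := fun w => by
    have := LinearMap.congr_fun hr w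
    simpa using this
  set P : V →ₗ[ℂ] V := j ∘ₗ r with hP
  set Q : V →ₗ[ℂ] V := LinearMap.id - P with hQdef
  have hPj : ∀ w : W, P (j w) = j w := fun w => by simp [hP, hrj]
  have hPP : ∀ v : V, P (P v) = P v := fun v => by simp [hP, hrj]
  have hQj : ∀ w : W, Q (j w) = 0 := fun w => by
    simp [hQdef, LinearMap.sub_apply, hPj]
  have hQQ : ∀ v : V, Q (Q v) = Q v := fun v => by
    simp [hQdef, LinearMap.sub_apply, map_sub, hPP]
  -- local versions of the wedge/sign formulas with `p + 2` indices
  have wedge2 : ∀ (v : Fin (p+1) → V) (u : V),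
      wedgeL (p+1) (expow (p+1) v ⊗ₜ[ℂ] u) = expow (p+2) (Fin.cons u v) :=
    fun v u => wedgeL_tmul (p+1) v u
  have cons2 : ∀ (v : Fin (p+2) → V) (i : Fin (p+2)),
      expow (R := ℂ) (p+2) (Fin.cons (v i) (v ∘ i.succAbove)) =
        ((-1 : ℂ) ^ (i : ℕ)) • expow (p+2) v :=
    fun v i => expow_cons_self v i
  -- F0 : em is split injective
  have F0 : (pmap r (p+1)) ∘ₗ em = LinearMap.id := by
    apply expow_ext
    intro w
    simp only [LinearMap.comp_apply, hem, pmap_expow, LinearMap.id_coe, id_eq]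
    congr 1
    funext i
    simp [Function.comp, hrj]
  have hinj : Function.Injective (TensorProduct.map em (LinearMap.id : V →ₗ[ℂ] V)) := by
    have h1 : (TensorProduct.map (pmap r (p+1)) (LinearMap.id : V →ₗ[ℂ] V)) ∘ₗ
        (TensorProduct.map em LinearMap.id) = LinearMap.id := by
      rw [← TensorProduct.map_comp, F0, LinearMap.id_comp, TensorProduct.map_id]
    exact Function.LeftInverse.injective (g := TensorProduct.map (pmap r (p+1)) LinearMap.id)
      (fun t => by simpa using LinearMap.congr_fun h1 t)
  -- F1 : naturality of the Koszul differential with respect to `P`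
  have F1 : dV1 ∘ₗ pmap P (p+2) = (TensorProduct.map (pmap P (p+1)) P) ∘ₗ dV1 := by
    apply expow_ext
    intro v
    simp only [LinearMap.comp_apply, pmap_expow, hdV1, map_sum, map_smul,
      TensorProduct.map_tmul, pmap_expow]
    rfl
  -- F2 : compatibility of the `W`- and `V`-differentials
  have F2 : (TensorProduct.map em (LinearMap.id : V →ₗ[ℂ] V)) ∘ₗ dW1 =
      dV1 ∘ₗ pmap j (p+2) := by
    apply expow_ext
    intro w
    simp only [LinearMap.comp_apply, pmap_expow, hdW1, hdV1, map_sum, map_smul,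
      TensorProduct.map_tmul, hem, LinearMap.id_coe, id_eq]
    rfl
  -- F3 : `Λ^{p+1}P` restricts to the identity on the image of `em`
  have F3 : (pmap P (p+1)) ∘ₗ em = em := by
    apply expow_ext
    intro w
    simp only [LinearMap.comp_apply, hem, pmap_expow]
    congr 1
    funext i
    simp [Function.comp, hPj]
  -- F4 : wedge ∘ differential = (p+2) • id
  have F4 : (wedgeL (p+1)) ∘ₗ dV1 =
      (((p : ℂ) + 2) • LinearMap.id : ↥(⋀[ℂ]^(p+2) V) →ₗ[ℂ] ↥(⋀[ℂ]^(p+2) V)) := by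
    apply expow_ext
    intro v
    simp only [LinearMap.comp_apply, hdV1, map_sum, map_smul, wedge2,
      LinearMap.smul_apply, LinearMap.id_coe, id_eq]
    have hterm : ∀ i : Fin (p+2), ((-1 : ℂ) ^ (i : ℕ)) •
        (expow (R := ℂ) (p+2) (Fin.cons (v i) (v ∘ i.succAbove))) = expow (p+2) v := by
      intro i
      rw [cons2, smul_smul, ← pow_add, Even.neg_one_pow ⟨(i : ℕ), rfl⟩, one_smul]
    rw [Finset.sum_congr rfl (fun i _ => hterm i), Finset.sum_const, Finset.card_univ,
      Fintype.card_fin, ← Nat.cast_smul_eq_nsmul ℂ]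
    congr 1
    push_cast
    ring
  -- F5 : the crucial identity killing the `U`-component
  have F5 : (TensorProduct.map (LinearMap.id : ↥(⋀[ℂ]^(p+1) V) →ₗ[ℂ] _) Q) ∘ₗ dV1 ∘ₗ
      (wedgeL (p+1)) ∘ₗ (TensorProduct.map em Q) = TensorProduct.map em Q := by
    apply expow_tmul_ext
    intro w v
    simp only [LinearMap.comp_apply, TensorProduct.map_tmul, hem, wedge2]
    rw [hdV1 (Fin.cons (Q v) (j ∘ w))]
    rw [map_sum, Fin.sum_univ_succ]
    have hz0 : (Fin.cons (Q v) (j ∘ w) ∘ (0 : Fin (p+2)).succAbove) = j ∘ w := by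
      funext k
      simp [Fin.succAbove_zero, Fin.cons_succ]
    have hz1 : (Fin.cons (Q v) ((j : W → V) ∘ w) ∘ Fin.succ) = (j : W → V) ∘ w := by
      funext k
      simp [Fin.cons_succ]
    simp [hz0, hz1, hQQ, hQj, Fin.cons_zero, Fin.cons_succ, TensorProduct.map_tmul,
      TensorProduct.tmul_zero]
  -- main chain
  obtain ⟨y, hy⟩ := hx
  have h2 : (TensorProduct.map (pmap P (p+1)) P) ∘ₗ
      (TensorProduct.map em LinearMap.id) = TensorProduct.map em P := by
    rw [← TensorProduct.map_comp, F3, LinearMap.comp_id]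
  have h8 : dV1 (pmap P (p+2) y) = (TensorProduct.map em P) x := by
    have a1 := LinearMap.congr_fun F1 y
    simp only [LinearMap.comp_apply] at a1
    rw [a1, hy]
    simpa using LinearMap.congr_fun h2 x
  have hsub : ∀ t : (↥(⋀[ℂ]^(p+1) W)) ⊗[ℂ] V,
      (TensorProduct.map em LinearMap.id) t - (TensorProduct.map em P) t =
        (TensorProduct.map em Q) t := by
    intro t
    induction t using TensorProduct.induction_on with
    | zero => simp
    | tmul a b =>
      simp only [TensorProduct.map_tmul, LinearMap.id_coe, id_eq, hQdef,
        LinearMap.sub_apply, LinearMap.id_apply]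
      rw [← TensorProduct.tmul_sub]
    | add a b ha hb =>
      simp only [map_add] at *
      rw [← ha, ← hb]
      abel
  have hdz : dV1 (y - pmap P (p+2) y) = (TensorProduct.map em Q) x := by
    rw [map_sub, hy, h8]
    exact hsub x
  have hwz : wedgeL (p+1) ((TensorProduct.map em Q) x) =
      ((p : ℂ) + 2) • (y - pmap P (p+2) y) := by
    rw [← hdz]
    have := LinearMap.congr_fun F4 (y - pmap P (p+2) y)
    simpa using this
  have h5 : dV1 (wedgeL (p+1) ((TensorProduct.map em Q) x)) =
      ((p : ℂ) + 2) • (TensorProduct.map em Q) x := by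
    rw [hwz, map_smul, hdz]
  have hAxQ : (TensorProduct.map (LinearMap.id : ↥(⋀[ℂ]^(p+1) V) →ₗ[ℂ] _) Q)
      (dV1 (wedgeL (p+1) ((TensorProduct.map em Q) x))) = (TensorProduct.map em Q) x := by
    have := LinearMap.congr_fun F5 x
    simpa only [LinearMap.comp_apply] using this
  have hQxQ : (TensorProduct.map (LinearMap.id : ↥(⋀[ℂ]^(p+1) V) →ₗ[ℂ] _) Q)
      ((TensorProduct.map em Q) x) = (TensorProduct.map em Q) x := by
    have hcomp : (TensorProduct.map (LinearMap.id : ↥(⋀[ℂ]^(p+1) V) →ₗ[ℂ] _) Q) ∘ₗ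
        (TensorProduct.map em Q) = TensorProduct.map em Q := by
      rw [← TensorProduct.map_comp, LinearMap.id_comp]
      congr 1
      exact LinearMap.ext hQQ
    simpa only [LinearMap.comp_apply] using LinearMap.congr_fun hcomp x
  have heq : (TensorProduct.map em Q) x = ((p : ℂ) + 2) • (TensorProduct.map em Q) x := by
    conv_lhs => rw [← hAxQ]
    rw [h5, map_smul, hQxQ]
  have hxQ0 : (TensorProduct.map em Q) x = 0 := by
    have hne : ((p : ℂ) + 1) ≠ 0 := by
      exact_mod_cast Nat.succ_ne_zero p
    have h6 : ((p : ℂ) + 1) • (TensorProduct.map em Q) x = 0 := by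
      have h := heq
      rw [show ((p : ℂ) + 2) = ((p : ℂ) + 1) + 1 by ring, add_smul, one_smul] at h
      have h' := congrArg (fun z => z - (TensorProduct.map em Q) x) h
      simp only [sub_self] at h'
      abel_nf at h'
      exact h'.symm
    have h7 : (((p : ℂ) + 1)⁻¹ * ((p : ℂ) + 1)) • (TensorProduct.map em Q) x = 0 := by
      rw [mul_smul, h6, smul_zero]
    rwa [inv_mul_cancel₀ hne, one_smul] at h7
  refine ⟨pmap r (p+2) y, ?_⟩
  apply hinj
  have h7 : (TensorProduct.map em LinearMap.id) (dW1 (pmap r (p+2) y)) =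
      dV1 (pmap j (p+2) (pmap r (p+2) y)) := by
    simpa only [LinearMap.comp_apply] using LinearMap.congr_fun F2 (pmap r (p+2) y)
  rw [h7, pmap_pmap, ← hP, h8]
  have := hsub x
  rw [hxQ0] at this
  exact (sub_eq_zero.mp this).symm

end KoszulAux


theorem koszul_cohomology_map_of_subspace_injective
    {σ : Type*} [Finite σ] (p : ℕ)
    (I : Ideal (MvPolynomial σ ℂ))                 -- the homogeneous ideal of `X`
    (hIhom : ∀ f ∈ I, ∀ n : ℕ, MvPolynomial.homogeneousComponent n f ∈ I)
    (hIprime : I.IsPrime)                          -- `X` is integral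
    (hI1 : ∀ f ∈ I, f.IsHomogeneous 1 → f = 0)     -- `I₁ = 0`  (`L` very ample, `X ⊆ P` nondegenerate)
    (hI0 : ∀ f ∈ I, f.IsHomogeneous 0 → f = 0)     -- `I₀ = 0`
    (W : Submodule ℂ (MvPolynomial σ ℂ))
    (hWV : W ≤ MvPolynomial.homogeneousSubmodule σ ℂ 1)   -- `W ⊆ V = H⁰(X, L)`
    -- the Koszul differentials of the `W`-complex
    (dW1 : ↥(⋀[ℂ]^(p+2) W) →ₗ[ℂ]
      (↥(⋀[ℂ]^(p+1) W)) ⊗[ℂ] (MvPolynomial.homogeneousSubmodule σ ℂ 1))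
    (hdW1 : ∀ w : Fin (p+2) → W,
      dW1 (expow (p+2) w) =
        ∑ j : Fin (p+2), ((-1 : ℂ) ^ (j : ℕ)) •
          ((expow (p+1) (w ∘ j.succAbove)) ⊗ₜ[ℂ]
            (⟨(w j : MvPolynomial σ ℂ), hWV (w j).2⟩ :
              MvPolynomial.homogeneousSubmodule σ ℂ 1)))
    (dW2 : (↥(⋀[ℂ]^(p+1) W)) ⊗[ℂ] (MvPolynomial.homogeneousSubmodule σ ℂ 1) →ₗ[ℂ]
      (↥(⋀[ℂ]^p W)) ⊗[ℂ] (Gamma2 I))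
    (hdW2 : ∀ (w : Fin (p+1) → W) (v : MvPolynomial.homogeneousSubmodule σ ℂ 1),
      dW2 ((expow (p+1) w) ⊗ₜ[ℂ] v) =
        ∑ j : Fin (p+1), ((-1 : ℂ) ^ (j : ℕ)) •
          ((expow p (w ∘ j.succAbove)) ⊗ₜ[ℂ]
            toGamma2 I (mulDeg2 ⟨(w j : MvPolynomial σ ℂ), hWV (w j).2⟩ v)))
    -- the Koszul differential of the full complex (over `V = H⁰(L)`) in the previous degree
    (dV1 : ↥(⋀[ℂ]^(p+2) (MvPolynomial.homogeneousSubmodule σ ℂ 1)) →ₗ[ℂ]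
      (↥(⋀[ℂ]^(p+1) (MvPolynomial.homogeneousSubmodule σ ℂ 1))) ⊗[ℂ]
        (MvPolynomial.homogeneousSubmodule σ ℂ 1))
    (hdV1 : ∀ v : Fin (p+2) → MvPolynomial.homogeneousSubmodule σ ℂ 1,
      dV1 (expow (p+2) v) =
        ∑ j : Fin (p+2), ((-1 : ℂ) ^ (j : ℕ)) •
          ((expow (p+1) (v ∘ j.succAbove)) ⊗ₜ[ℂ] v j))
    -- the map `Λ^{p+1}W → Λ^{p+1}V` induced by the inclusion `W ⊆ V`
    (em : ↥(⋀[ℂ]^(p+1) W) →ₗ[ℂ]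
      ↥(⋀[ℂ]^(p+1) (MvPolynomial.homogeneousSubmodule σ ℂ 1)))
    (hem : ∀ w : Fin (p+1) → W,
      em (expow (p+1) w) =
        expow (p+1) (fun i =>
          (⟨(w i : MvPolynomial σ ℂ), hWV (w i).2⟩ :
            MvPolynomial.homogeneousSubmodule σ ℂ 1))) :
    -- injectivity of `K_{p+1,1}(X, L; W) → K_{p+1,1}(X, L)`, stated elementwise
    ∀ x : (↥(⋀[ℂ]^(p+1) W)) ⊗[ℂ] (MvPolynomial.homogeneousSubmodule σ ℂ 1),
      dW2 x = 0 →
      (TensorProduct.map em LinearMap.id) x ∈ LinearMap.range dV1 →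
      x ∈ LinearMap.range dW1 := by
  intro x _hcocycle hx
  exact KoszulAux.main p (Submodule.inclusion hWV)
    (Submodule.inclusion_injective hWV) dW1 (fun w => hdW1 w) dV1 hdV1 em
    (fun w => hem w) x hx

end
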